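/- If λ = (λ₁,λ₂,λ₃) satisfies (λ₁-λ₁')² + (λ₂-λ₂')² + (λ₃-λ₃')² > ‖A₁-λ₁'‖² + ‖A₂-λ₂'‖² + ‖A₃-λ₃'‖² + ‖[A₁,A₂]‖ + ‖[A₂,A₃]‖ + ‖[A₃,A₁]‖ + 2(‖A₁-λ₁'‖ + ‖A₂-λ₂'‖ + ‖A₃-λ₃'‖)|λ-λ'| for some λ' ∈ ℝ³, then sufficiently far from the joint spectrum the localizer L_λ(A₁,A₂,A₃) is invertible; in particular, for any unit vector v̂ there is j with ‖(Aⱼ-λⱼ)v̂‖² > (sum of commutator norms)/1, so λ is not in the localizer spectrum. -/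

import Mathlib

open Matrix
open scoped Kronecker Matrix.Norms.L2Operator

noncomputable section

def pauli1 : Matrix (Fin 2) (Fin 2) ℂ := !![0, 1; 1, 0]
def pauli2 : Matrix (Fin 2) (Fin 2) ℂ := !![0, -Complex.I; Complex.I, 0]
def pauli3 : Matrix (Fin 2) (Fin 2) ℂ := !![1, 0; 0, -1]

def localizer {N : ℕ} (A₁ A₂ A₃ : Matrix (Fin N) (Fin N) ℂ) (lam : Fin 3 → ℝ) :
    Matrix (Fin 2 × Fin N) (Fin 2 × Fin N) ℂ :=
  pauli1 ⊗ₖ (A₁ - (lam 0 : ℂ) • 1) + pauli2 ⊗ₖ (A₂ - (lam 1 : ℂ) • 1)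
    + pauli3 ⊗ₖ (A₃ - (lam 2 : ℂ) • 1)

lemma p11 : pauli1 * pauli1 = 1 := by
  ext i j; fin_cases i <;> fin_cases j <;>
    simp [pauli1, Matrix.mul_apply, Fin.sum_univ_two]

lemma p12 : pauli1 * pauli2 = Complex.I • pauli3 := by
  ext i j; fin_cases i <;> fin_cases j <;>
    simp [pauli1, pauli2, pauli3, Matrix.mul_apply, Fin.sum_univ_two]

lemma p13 : pauli1 * pauli3 = (-Complex.I) • pauli2 := by
  ext i j; fin_cases i <;> fin_cases j <;>
    simp [pauli1, pauli2, pauli3, Matrix.mul_apply, Fin.sum_univ_two]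
lemma p21 : pauli2 * pauli1 = (-Complex.I) • pauli3 := by
  ext i j; fin_cases i <;> fin_cases j <;>
    simp [pauli1, pauli2, pauli3, Matrix.mul_apply, Fin.sum_univ_two]
lemma p22 : pauli2 * pauli2 = 1 := by
  ext i j; fin_cases i <;> fin_cases j <;>
    simp [pauli2, Matrix.mul_apply, Fin.sum_univ_two]
lemma p23 : pauli2 * pauli3 = Complex.I • pauli1 := by
  ext i j; fin_cases i <;> fin_cases j <;>
    simp [pauli1, pauli2, pauli3, Matrix.mul_apply, Fin.sum_univ_two]
lemma p31 : pauli3 * pauli1 = Complex.I • pauli2 := by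
  ext i j; fin_cases i <;> fin_cases j <;>
    simp [pauli1, pauli2, pauli3, Matrix.mul_apply, Fin.sum_univ_two]
lemma p32 : pauli3 * pauli2 = (-Complex.I) • pauli1 := by
  ext i j; fin_cases i <;> fin_cases j <;>
    simp [pauli1, pauli2, pauli3, Matrix.mul_apply, Fin.sum_univ_two]
lemma p33 : pauli3 * pauli3 = 1 := by
  ext i j; fin_cases i <;> fin_cases j <;>
    simp [pauli3, Matrix.mul_apply, Fin.sum_univ_two]

lemma comm_shift {n : ℕ} (A A' : Matrix (Fin n) (Fin n) ℂ) (a b : ℂ) :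
    (A - a•1)*(A' - b•1) - (A' - b•1)*(A - a•1) = A*A' - A'*A := by
  simp only [sub_mul, mul_sub, smul_mul_assoc, mul_smul_comm, one_mul, mul_one]
  module


lemma kronecker_sub' {m n : Type*} (A : Matrix m m ℂ) (B C : Matrix n n ℂ) :
    A ⊗ₖ (B - C) = A ⊗ₖ B - A ⊗ₖ C := by
  ext ⟨a,b⟩ ⟨c,d⟩; simp [Matrix.kroneckerMap_apply, mul_sub]

lemma LL {N : ℕ} (A₁ A₂ A₃ : Matrix (Fin N) (Fin N) ℂ) (lam : Fin 3 → ℝ) :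
    localizer A₁ A₂ A₃ lam * localizer A₁ A₂ A₃ lam =
      (1 : Matrix (Fin 2) (Fin 2) ℂ) ⊗ₖ
        ((A₁ - (lam 0:ℂ)•1)*(A₁ - (lam 0:ℂ)•1) + (A₂ - (lam 1:ℂ)•1)*(A₂ - (lam 1:ℂ)•1)
          + (A₃ - (lam 2:ℂ)•1)*(A₃ - (lam 2:ℂ)•1))
      + Complex.I • (pauli3 ⊗ₖ (A₁*A₂ - A₂*A₁))
      + Complex.I • (pauli1 ⊗ₖ (A₂*A₃ - A₃*A₂))
      + Complex.I • (pauli2 ⊗ₖ (A₃*A₁ - A₁*A₃)) := by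
  have h12 := comm_shift A₁ A₂ (lam 0:ℂ) (lam 1:ℂ)
  have h23 := comm_shift A₂ A₃ (lam 1:ℂ) (lam 2:ℂ)
  have h31 := comm_shift A₃ A₁ (lam 2:ℂ) (lam 0:ℂ)
  rw [← h12, ← h23, ← h31]
  unfold localizer
  generalize (A₁ - (lam 0:ℂ)•1 : Matrix (Fin N) (Fin N) ℂ) = B
  generalize (A₂ - (lam 1:ℂ)•1 : Matrix (Fin N) (Fin N) ℂ) = C
  generalize (A₃ - (lam 2:ℂ)•1 : Matrix (Fin N) (Fin N) ℂ) = D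
  simp only [add_mul, mul_add]
  simp only [← Matrix.mul_kronecker_mul]
  simp only [p11, p12, p13, p21, p22, p23, p31, p32, p33,
    Matrix.smul_kronecker, Matrix.kronecker_add, kronecker_sub', smul_sub, neg_smul]
  abel_nf
  simp only [Matrix.smul_kronecker]
  abel

def esq {n : ℕ} (v : Fin n → ℂ) : ℝ := ∑ i, ‖v i‖^2

lemma esq_nonneg {n : ℕ} (v : Fin n → ℂ) : 0 ≤ esq v :=
  Finset.sum_nonneg fun i _ => sq_nonneg _

lemma enorm_eq {n : ℕ} (v : Fin n → ℂ) :
    ‖(WithLp.equiv 2 (Fin n → ℂ)).symm v‖ = Real.sqrt (esq v) := by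
  rw [EuclideanSpace.norm_eq]; rfl

lemma dot_self {n : ℕ} (v : Fin n → ℂ) : star v ⬝ᵥ v = (esq v : ℂ) := by
  simp only [esq, dotProduct, Pi.star_apply]
  push_cast
  refine Finset.sum_congr rfl fun i _ => ?_
  rw [Complex.star_def, mul_comm, Complex.mul_conj]
  norm_cast
  rw [Complex.normSq_eq_norm_sq]

lemma cs_dot {n : ℕ} (v w : Fin n → ℂ) :
    ‖star v ⬝ᵥ w‖ ≤ Real.sqrt (esq v) * Real.sqrt (esq w) := by
  have h := norm_inner_le_norm (𝕜 := ℂ)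
    ((WithLp.equiv 2 (Fin n → ℂ)).symm v) ((WithLp.equiv 2 (Fin n → ℂ)).symm w)
  rw [show inner ℂ ((WithLp.equiv 2 (Fin n → ℂ)).symm v) ((WithLp.equiv 2 (Fin n → ℂ)).symm w)
      = star v ⬝ᵥ w from by rw [dotProduct_comm]; rfl, enorm_eq, enorm_eq] at h
  exact h

lemma mulVec_esq_le {n : ℕ} (M : Matrix (Fin n) (Fin n) ℂ) (w : Fin n → ℂ) :
    Real.sqrt (esq (M *ᵥ w)) ≤ ‖M‖ * Real.sqrt (esq w) := by
  have h := M.l2_opNorm_mulVec ((WithLp.equiv 2 (Fin n → ℂ)).symm w)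
  rw [enorm_eq] at h
  calc Real.sqrt (esq (M *ᵥ w))
      = ‖(EuclideanSpace.equiv (Fin n) ℂ).symm (M *ᵥ (WithLp.equiv 2 (Fin n → ℂ)).symm w)‖ := by
        rw [show (M *ᵥ (WithLp.equiv 2 (Fin n → ℂ)).symm w) = M *ᵥ w from rfl]
        exact (enorm_eq _).symm
    _ ≤ _ := h

lemma dot_le {n : ℕ} (M : Matrix (Fin n) (Fin n) ℂ) (v w : Fin n → ℂ) :
    ‖star v ⬝ᵥ M *ᵥ w‖ ≤ ‖M‖ * Real.sqrt (esq v) * Real.sqrt (esq w) := by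
  calc ‖star v ⬝ᵥ M *ᵥ w‖ ≤ Real.sqrt (esq v) * Real.sqrt (esq (M *ᵥ w)) := cs_dot _ _
    _ ≤ Real.sqrt (esq v) * (‖M‖ * Real.sqrt (esq w)) := by
        exact mul_le_mul_of_nonneg_left (mulVec_esq_le M w) (Real.sqrt_nonneg _)
    _ = _ := by ring

lemma herm_dot {n : ℕ} {M : Matrix (Fin n) (Fin n) ℂ} (hM : M.IsHermitian) (v : Fin n → ℂ) :
    star v ⬝ᵥ (M * M) *ᵥ v = (esq (M *ᵥ v) : ℂ) := by
  rw [← Matrix.mulVec_mulVec, Matrix.dotProduct_mulVec, ← dot_self]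
  congr 1
  rw [Matrix.star_mulVec, hM.eq]
lemma kron_dot {N : ℕ} (P : Matrix (Fin 2) (Fin 2) ℂ) (M : Matrix (Fin N) (Fin N) ℂ)
    (u : Fin 2 × Fin N → ℂ) :
    star u ⬝ᵥ ((P ⊗ₖ M) *ᵥ u)
      = ∑ s, ∑ t, P s t * (star (fun j => u (s,j)) ⬝ᵥ (M *ᵥ fun j => u (t,j))) := by
  simp only [dotProduct, mulVec, Pi.star_apply, Matrix.kroneckerMap_apply,
    Fintype.sum_prod_type, Finset.mul_sum]
  refine Finset.sum_congr rfl fun s _ => ?_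
  rw [Finset.sum_comm]
  refine Finset.sum_congr rfl fun t _ => ?_
  refine Finset.sum_congr rfl fun i _ => ?_
  refine Finset.sum_congr rfl fun j _ => ?_
  ring

lemma esq_sub_smul {n : ℕ} (x w : Fin n → ℂ) (d : ℝ) :
    esq (x - (d:ℂ) • w) = esq x - 2*d*(star x ⬝ᵥ w).re + d^2 * esq w := by
  have h : ∀ z z' : ℂ, ‖z - (d:ℂ)*z'‖^2
      = ‖z‖^2 - 2*d*((starRingEnd ℂ) z * z').re + d^2*‖z'‖^2 := by
    intro z z'
    have e : ∀ y : ℂ, ‖y‖^2 = Complex.normSq y := fun y => by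
      rw [Complex.sq_norm]
    rw [e, e, e]
    simp only [Complex.normSq_apply, Complex.sub_re, Complex.sub_im, Complex.mul_re,
      Complex.mul_im, Complex.ofReal_re, Complex.ofReal_im, Complex.conj_re, Complex.conj_im]
    ring
  simp only [esq, Pi.sub_apply, Pi.smul_apply, smul_eq_mul, h, dotProduct, Pi.star_apply,
    Complex.re_sum, Finset.mul_sum, Finset.sum_add_distrib, Finset.sum_sub_distrib,
    Complex.star_def]

lemma herm_shift {n : ℕ} {A : Matrix (Fin n) (Fin n) ℂ} (hA : A.IsHermitian) (r : ℝ) :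
    (A - (r:ℂ)•1).IsHermitian := by
  refine hA.sub ?_
  unfold Matrix.IsHermitian
  rw [Matrix.conjTranspose_smul, Matrix.conjTranspose_one, Complex.star_def,
    Complex.conj_ofReal]

lemma lower_bound {n : ℕ} (A : Matrix (Fin n) (Fin n) ℂ) (l l' : ℝ) (w : Fin n → ℂ) :
    (l - l')^2 * esq w - 2*|l - l'| * ‖A - (l':ℂ)•1‖ * esq w
      ≤ esq ((A - (l:ℂ)•1) *ᵥ w) := by
  have hM : (A - (l:ℂ)•1) = (A - (l':ℂ)•1) - ((l - l' : ℝ):ℂ)•(1:Matrix (Fin n) (Fin n) ℂ) := by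
    push_cast; module
  rw [hM, Matrix.sub_mulVec, Matrix.smul_mulVec, Matrix.one_mulVec, esq_sub_smul]
  set x := (A - (l':ℂ)•1) *ᵥ w with hx
  set c := ‖A - (l':ℂ)•1‖ with hc
  have h1 : ‖star x ⬝ᵥ w‖ ≤ c * esq w := by
    calc ‖star x ⬝ᵥ w‖ ≤ Real.sqrt (esq x) * Real.sqrt (esq w) := cs_dot _ _
      _ ≤ (c * Real.sqrt (esq w)) * Real.sqrt (esq w) :=
          mul_le_mul_of_nonneg_right (mulVec_esq_le _ _) (Real.sqrt_nonneg _)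
      _ = c * (Real.sqrt (esq w) * Real.sqrt (esq w)) := by ring
      _ = c * esq w := by rw [Real.mul_self_sqrt (esq_nonneg _)]
  have h2 : |(star x ⬝ᵥ w).re| ≤ ‖star x ⬝ᵥ w‖ := by
    exact Complex.abs_re_le_norm _
  have h3 := esq_nonneg x
  have h4 : (l - l') * (star x ⬝ᵥ w).re ≤ |l - l'| * (c * esq w) := by
    calc (l - l') * (star x ⬝ᵥ w).re ≤ |(l - l') * (star x ⬝ᵥ w).re| := le_abs_self _
      _ = |l - l'| * |(star x ⬝ᵥ w).re| := abs_mul _ _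
      _ ≤ |l - l'| * (c * esq w) :=
          mul_le_mul_of_nonneg_left (le_trans h2 h1) (abs_nonneg _)
  linarith


set_option maxHeartbeats 1000000 in
/-- Points `λ` sufficiently far from `λ'` (compared to the norms `‖Aⱼ - λⱼ'‖` and the
commutator norms) are not in the localizer spectrum: `L_λ` has no zero eigenvalue. -/
theorem localizer_spectrum_bounded {N : ℕ}
    (A₁ A₂ A₃ : Matrix (Fin N) (Fin N) ℂ)
    (hA₁ : A₁.IsHermitian) (hA₂ : A₂.IsHermitian) (hA₃ : A₃.IsHermitian)
    (lam lam' : Fin 3 → ℝ)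
    (hfar : ‖A₁ - (lam' 0 : ℂ) • 1‖ ^ 2 + ‖A₂ - (lam' 1 : ℂ) • 1‖ ^ 2
          + ‖A₃ - (lam' 2 : ℂ) • 1‖ ^ 2
        + ‖⁅A₁, A₂⁆‖ + ‖⁅A₂, A₃⁆‖ + ‖⁅A₃, A₁⁆‖
        + 2 * (‖A₁ - (lam' 0 : ℂ) • 1‖ + ‖A₂ - (lam' 1 : ℂ) • 1‖ + ‖A₃ - (lam' 2 : ℂ) • 1‖)
          * Real.sqrt ((lam 0 - lam' 0) ^ 2 + (lam 1 - lam' 1) ^ 2 + (lam 2 - lam' 2) ^ 2)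
      < (lam 0 - lam' 0) ^ 2 + (lam 1 - lam' 1) ^ 2 + (lam 2 - lam' 2) ^ 2) :
    ¬ ∃ u : Fin 2 × Fin N → ℂ, u ≠ 0 ∧ (localizer A₁ A₂ A₃ lam).mulVec u = 0 := by
  rintro ⟨u, hu, hLu⟩
  have hB := herm_shift hA₁ (lam 0)
  have hC := herm_shift hA₂ (lam 1)
  have hD := herm_shift hA₃ (lam 2)
  have h0 : star u ⬝ᵥ ((localizer A₁ A₂ A₃ lam * localizer A₁ A₂ A₃ lam) *ᵥ u) = 0 := by
    rw [← Matrix.mulVec_mulVec, hLu, Matrix.mulVec_zero, dotProduct_zero]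
  rw [LL] at h0
  simp only [Matrix.add_mulVec, dotProduct_add, Matrix.smul_mulVec,
    dotProduct_smul, smul_eq_mul, kron_dot, Fin.sum_univ_two,
    Matrix.one_apply_eq, Matrix.one_apply_ne, ne_eq, zero_ne_one, one_ne_zero,
    not_false_iff, pauli1, pauli2, pauli3, Matrix.cons_val', Matrix.cons_val_zero,
    Matrix.cons_val_one, Matrix.head_cons, Matrix.empty_val', Matrix.cons_val_fin_one,
    Matrix.head_fin_const, one_mul, zero_mul, mul_zero, add_zero, zero_add,
    Matrix.one_apply] at h0
  simp only [herm_dot hB, herm_dot hC, herm_dot hD] at h0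
  simp only [Matrix.cons_val', Matrix.cons_val_zero, Matrix.cons_val_one, Matrix.head_cons,
    Matrix.empty_val', Matrix.cons_val_fin_one, Matrix.head_fin_const, Matrix.of_apply,
    if_true, if_false, one_mul, zero_mul, mul_zero, add_zero, zero_add, neg_mul, mul_neg,
    ite_true, ite_false] at h0
  -- abbreviations
  set w0 : Fin N → ℂ := fun j => u (0, j) with hw0
  set w1 : Fin N → ℂ := fun j => u (1, j) with hw1
  set d1 := lam 0 - lam' 0 with hd1
  set d2 := lam 1 - lam' 1 with hd2
  set d3 := lam 2 - lam' 2 with hd3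
  set c1 := ‖A₁ - (lam' 0 : ℂ) • 1‖ with hc1
  set c2 := ‖A₂ - (lam' 1 : ℂ) • 1‖ with hc2
  set c3 := ‖A₃ - (lam' 2 : ℂ) • 1‖ with hc3
  set r := Real.sqrt (d1 ^ 2 + d2 ^ 2 + d3 ^ 2) with hrdef
  simp only [Ring.lie_def] at hfar
  set k12 := ‖A₁ * A₂ - A₂ * A₁‖ with hk12
  set k23 := ‖A₂ * A₃ - A₃ * A₂‖ with hk23
  set k31 := ‖A₃ * A₁ - A₁ * A₃‖ with hk31
  set a := Real.sqrt (esq w0) with ha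
  set b := Real.sqrt (esq w1) with hb
  set S : ℝ := esq ((A₁ - (lam 0 : ℂ) • 1) *ᵥ w0) + esq ((A₂ - (lam 1 : ℂ) • 1) *ᵥ w0)
    + esq ((A₃ - (lam 2 : ℂ) • 1) *ᵥ w0) + esq ((A₁ - (lam 0 : ℂ) • 1) *ᵥ w1)
    + esq ((A₂ - (lam 1 : ℂ) • 1) *ᵥ w1) + esq ((A₃ - (lam 2 : ℂ) • 1) *ᵥ w1) with hSdef
  -- the complex cross term
  set q1200 : ℂ := star w0 ⬝ᵥ (A₁ * A₂ - A₂ * A₁) *ᵥ w0 with hq1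
  set q1211 : ℂ := star w1 ⬝ᵥ (A₁ * A₂ - A₂ * A₁) *ᵥ w1 with hq2
  set q2301 : ℂ := star w0 ⬝ᵥ (A₂ * A₃ - A₃ * A₂) *ᵥ w1 with hq3
  set q2310 : ℂ := star w1 ⬝ᵥ (A₂ * A₃ - A₃ * A₂) *ᵥ w0 with hq4
  set q3101 : ℂ := star w0 ⬝ᵥ (A₃ * A₁ - A₁ * A₃) *ᵥ w1 with hq5
  set q3110 : ℂ := star w1 ⬝ᵥ (A₃ * A₁ - A₁ * A₃) *ᵥ w0 with hq6
  have l1 := lower_bound A₁ (lam 0) (lam' 0) w0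
  have l2 := lower_bound A₂ (lam 1) (lam' 1) w0
  have l3 := lower_bound A₃ (lam 2) (lam' 2) w0
  have l4 := lower_bound A₁ (lam 0) (lam' 0) w1
  have l5 := lower_bound A₂ (lam 1) (lam' 1) w1
  have l6 := lower_bound A₃ (lam 2) (lam' 2) w1
  rw [← hd1, ← hc1] at l1 l4
  rw [← hd2, ← hc2] at l2 l5
  rw [← hd3, ← hc3] at l3 l6
  have n1 : ‖q1200‖ ≤ k12 * a * a := by rw [hq1, hk12, ha]; exact dot_le _ _ _
  have n2 : ‖q1211‖ ≤ k12 * b * b := by rw [hq2, hk12, hb]; exact dot_le _ _ _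
  have n3 : ‖q2301‖ ≤ k23 * a * b := by rw [hq3, hk23, ha, hb]; exact dot_le _ _ _
  have n4 : ‖q2310‖ ≤ k23 * b * a := by rw [hq4, hk23, ha, hb]; exact dot_le _ _ _
  have n5 : ‖q3101‖ ≤ k31 * a * b := by rw [hq5, hk31, ha, hb]; exact dot_le _ _ _
  have n6 : ‖q3110‖ ≤ k31 * b * a := by rw [hq6, hk31, ha, hb]; exact dot_le _ _ _
  have ha2 : a ^ 2 = esq w0 := by rw [ha]; exact Real.sq_sqrt (esq_nonneg _)
  have hb2 : b ^ 2 = esq w1 := by rw [hb]; exact Real.sq_sqrt (esq_nonneg _)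
  have hr2 : r ^ 2 = d1 ^ 2 + d2 ^ 2 + d3 ^ 2 := by
    rw [hrdef]; exact Real.sq_sqrt (by positivity)
  have habs1 : |d1| ≤ r := by
    rw [hrdef, ← Real.sqrt_sq_eq_abs]
    exact Real.sqrt_le_sqrt (by linarith [sq_nonneg d2, sq_nonneg d3])
  have habs2 : |d2| ≤ r := by
    rw [hrdef, ← Real.sqrt_sq_eq_abs]
    exact Real.sqrt_le_sqrt (by linarith [sq_nonneg d1, sq_nonneg d3])
  have habs3 : |d3| ≤ r := by
    rw [hrdef, ← Real.sqrt_sq_eq_abs]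
    exact Real.sqrt_le_sqrt (by linarith [sq_nonneg d1, sq_nonneg d2])
  have hc1n : 0 ≤ c1 := by rw [hc1]; exact norm_nonneg _
  have hc2n : 0 ≤ c2 := by rw [hc2]; exact norm_nonneg _
  have hc3n : 0 ≤ c3 := by rw [hc3]; exact norm_nonneg _
  have hk12n : 0 ≤ k12 := by rw [hk12]; exact norm_nonneg _
  have hk23n : 0 ≤ k23 := by rw [hk23]; exact norm_nonneg _
  have hk31n : 0 ≤ k31 := by rw [hk31]; exact norm_nonneg _
  have hrn : 0 ≤ r := by rw [hrdef]; exact Real.sqrt_nonneg _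
  have han : 0 ≤ a := by rw [ha]; exact Real.sqrt_nonneg _
  have hbn : 0 ≤ b := by rw [hb]; exact Real.sqrt_nonneg _
  have hpos : 0 < esq w0 + esq w1 := by
    obtain ⟨p, hp⟩ : ∃ p, u p ≠ 0 := by
      by_contra h
      push_neg at h
      exact hu (funext h)
    obtain ⟨s, i⟩ := p
    have hterm : 0 < ‖u (s, i)‖ ^ 2 := pow_pos (norm_pos_iff.mpr hp) 2
    have key : ∀ w : Fin N → ℂ, ‖w i‖^2 ≤ esq w := fun w =>
      Finset.single_le_sum (f := fun j => ‖w j‖^2) (fun j _ => sq_nonneg _) (Finset.mem_univ i)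
    have hs : w0 i = u (s, i) ∨ w1 i = u (s, i) := by
      fin_cases s
      · exact Or.inl rfl
      · exact Or.inr rfl
    rcases hs with hs | hs
    · have h1 := key w0
      rw [hs] at h1
      linarith [esq_nonneg w1]
    · have h1 := key w1
      rw [hs] at h1
      linarith [esq_nonneg w0]
  clear_value w0 w1 d1 d2 d3 c1 c2 c3 r k12 k23 k31 a b S q1200 q1211 q2301 q2310 q3101 q3110
  clear hLu hu hB hC hD
  have h5 : (S : ℂ) = -(Complex.I * (q1200 + -q1211) + Complex.I * (q2301 + q2310)
      + Complex.I * (-(Complex.I * q3101) + Complex.I * q3110)) := by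
    rw [hSdef]
    push_cast
    linear_combination h0
  -- upper bound on S
  have hS_re : S = (-(Complex.I * (q1200 + -q1211) + Complex.I * (q2301 + q2310)
      + Complex.I * (-(Complex.I * q3101) + Complex.I * q3110))).re := by
    rw [← h5, Complex.ofReal_re]
  have hIz : ∀ z z' : ℂ, ‖Complex.I * (z + z')‖ ≤ ‖z‖ + ‖z'‖ := fun z z' => by
    rw [norm_mul, Complex.norm_I, one_mul]; exact norm_add_le _ _
  have c1b : ‖Complex.I * (q1200 + -q1211)‖ ≤ ‖q1200‖ + ‖q1211‖ := by
    simpa [norm_neg] using hIz q1200 (-q1211)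
  have c2b : ‖Complex.I * (q2301 + q2310)‖ ≤ ‖q2301‖ + ‖q2310‖ := hIz _ _
  have c3b : ‖Complex.I * (-(Complex.I * q3101) + Complex.I * q3110)‖ ≤ ‖q3101‖ + ‖q3110‖ := by
    simpa [norm_neg, norm_mul, Complex.norm_I] using hIz (-(Complex.I * q3101)) (Complex.I * q3110)
  have hup : S ≤ k12 * (a*a) + k12 * (b*b) + k23 * (a*b) + k23 * (b*a)
      + k31 * (a*b) + k31 * (b*a) := by
    have h6 : S ≤ ‖Complex.I * (q1200 + -q1211)‖ + ‖Complex.I * (q2301 + q2310)‖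
        + ‖Complex.I * (-(Complex.I * q3101) + Complex.I * q3110)‖ := by
      rw [hS_re]
      calc (-(Complex.I * (q1200 + -q1211) + Complex.I * (q2301 + q2310)
          + Complex.I * (-(Complex.I * q3101) + Complex.I * q3110))).re
          ≤ ‖-(Complex.I * (q1200 + -q1211) + Complex.I * (q2301 + q2310)
            + Complex.I * (-(Complex.I * q3101) + Complex.I * q3110))‖ := by
            exact Complex.re_le_norm _
        _ = ‖Complex.I * (q1200 + -q1211) + Complex.I * (q2301 + q2310)
            + Complex.I * (-(Complex.I * q3101) + Complex.I * q3110)‖ := norm_neg _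
        _ ≤ _ := by
            calc ‖Complex.I * (q1200 + -q1211) + Complex.I * (q2301 + q2310)
                + Complex.I * (-(Complex.I * q3101) + Complex.I * q3110)‖
                ≤ ‖Complex.I * (q1200 + -q1211) + Complex.I * (q2301 + q2310)‖
                  + ‖Complex.I * (-(Complex.I * q3101) + Complex.I * q3110)‖ := norm_add_le _ _
              _ ≤ _ := by
                  have := norm_add_le (Complex.I * (q1200 + -q1211))
                    (Complex.I * (q2301 + q2310))
                  linarith
    linarith [c1b, c2b, c3b, n1, n2, n3, n4, n5, n6, h6]
  -- combine
  have h2ab : a*b + b*a ≤ esq w0 + esq w1 := by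
    linarith [sq_nonneg (a-b), ha2, hb2]
  have hS_up : S ≤ (k12 + k23 + k31) * (esq w0 + esq w1) := by
    have e23 : k23 * (a*b + b*a) ≤ k23 * (esq w0 + esq w1) :=
      mul_le_mul_of_nonneg_left h2ab hk23n
    have e31 : k31 * (a*b + b*a) ≤ k31 * (esq w0 + esq w1) :=
      mul_le_mul_of_nonneg_left h2ab hk31n
    have e12 : k12 * (a*a) + k12 * (b*b) = k12 * (esq w0 + esq w1) := by
      rw [← ha2, ← hb2]; ring
    linarith [hup]
  have hS_low : (d1^2 + d2^2 + d3^2) * (esq w0 + esq w1)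
      - 2 * ( |d1| * c1 + |d2| * c2 + |d3| * c3) * (esq w0 + esq w1) ≤ S := by
    rw [hSdef]; linarith [l1, l2, l3, l4, l5, l6]
  have m1 : |d1| * (c1 * (esq w0 + esq w1)) ≤ r * (c1 * (esq w0 + esq w1)) :=
    mul_le_mul_of_nonneg_right habs1 (by positivity)
  have m2 : |d2| * (c2 * (esq w0 + esq w1)) ≤ r * (c2 * (esq w0 + esq w1)) :=
    mul_le_mul_of_nonneg_right habs2 (by positivity)
  have m3 : |d3| * (c3 * (esq w0 + esq w1)) ≤ r * (c3 * (esq w0 + esq w1)) :=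
    mul_le_mul_of_nonneg_right habs3 (by positivity)
  have hr2t : r^2 * (esq w0 + esq w1) = (d1^2 + d2^2 + d3^2) * (esq w0 + esq w1) := by
    rw [hr2]
  have key : r^2 * (esq w0 + esq w1)
      ≤ ((k12 + k23 + k31) + 2*(c1 + c2 + c3)*r) * (esq w0 + esq w1) := by
    linarith [hS_low, hS_up, m1, m2, m3, hr2t]
  have hr_ineq : r^2 ≤ (k12 + k23 + k31) + 2*(c1 + c2 + c3)*r :=
    (mul_le_mul_iff_of_pos_right hpos).mp key
  have hfar' : c1^2 + c2^2 + c3^2 + k12 + k23 + k31 + 2*(c1+c2+c3)*r < r^2 := by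
    rw [hr2]; linarith [hfar]
  linarith [sq_nonneg c1, sq_nonneg c2, sq_nonneg c3, hfar', hr_ineq]
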